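/- Suppose a probability measure F on ℝ satisfies F = (1 − θ)·H + θ·(K_a ∗ δ_u) for some a > 0, u ∈ ℝ, θ ∈ (0,1] and some probability measure H on ℝ. Then for all p, q with 0 < q ≤ p ≤ 1, there exists a probability measure H′ on ℝ such that F = (1 − qθ)·H′ + qθ·(K_{pa} ∗ δ_u). -/

import Mathlib

open MeasureTheory

/-- The triangular density with parameter `a`. -/
noncomputable def triDensity (a : ℝ) (x : ℝ) : ℝ :=
  if |x| ≤ a then (1 / a) * (1 - |x| / a) else 0

/-- `K_a`, the probability measure on `ℝ` with the triangular density `κ_a`. -/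
noncomputable def triMeasure (a : ℝ) : Measure ℝ :=
  volume.withDensity fun x => ENNReal.ofReal (triDensity a x)

lemma triDensity_nonneg {a : ℝ} (ha : 0 < a) (x : ℝ) : 0 ≤ triDensity a x := by
  unfold triDensity
  split_ifs with h
  · have h0 : 0 ≤ |x| := abs_nonneg x
    have h1 : |x| / a ≤ 1 := by rw [div_le_one ha]; exact h
    have : (0:ℝ) ≤ 1 - |x| / a := by linarith
    positivity
  · exact le_refl _

lemma triDensity_measurable (a : ℝ) : Measurable (triDensity a) := by
  unfold triDensity
  exact Measurable.ite (measurableSet_le (by fun_prop) measurable_const) (by fun_prop)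
    measurable_const

lemma triDensity_eq_indicator (a : ℝ) :
    triDensity a = Set.indicator (Set.Icc (-a) a) (fun x => (1 / a) * (1 - |x| / a)) := by
  funext x
  simp [triDensity, Set.indicator_apply, ← abs_le]

lemma triDensity_integrable {a : ℝ} (ha : 0 < a) : Integrable (triDensity a) := by
  rw [triDensity_eq_indicator]
  refine (IntegrableOn.integrable_indicator ?_ measurableSet_Icc)
  exact (Continuous.integrableOn_Icc (by fun_prop (disch := positivity)))

lemma triDensity_integral {a : ℝ} (ha : 0 < a) : ∫ x, triDensity a x = 1 := by
  rw [triDensity_eq_indicator, integral_indicator measurableSet_Icc,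
    integral_Icc_eq_integral_Ioc, ← intervalIntegral.integral_of_le (by linarith)]
  have h1 : ∫ x in (-a)..0, (1 / a) * (1 - |x| / a) = 1/2 := by
    rw [intervalIntegral.integral_congr (g := fun x => 1/a + x/a^2) ?_]
    · rw [intervalIntegral.integral_add intervalIntegrable_const
        (((by fun_prop : Continuous fun x : ℝ => x / a ^ 2)).intervalIntegrable _ _),
        intervalIntegral.integral_const, intervalIntegral.integral_div, integral_id]
      field_simp
      ring_nf
      field_simp
      ring
    · intro x hx
      rw [Set.uIcc_of_le (by linarith)] at hx
      simp only [abs_of_nonpos hx.2]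
      field_simp
      ring
  have h2 : ∫ x in (0:ℝ)..a, (1 / a) * (1 - |x| / a) = 1/2 := by
    rw [intervalIntegral.integral_congr (g := fun x => 1/a - x/a^2) ?_]
    · rw [intervalIntegral.integral_sub intervalIntegrable_const
        (((by fun_prop : Continuous fun x : ℝ => x / a ^ 2)).intervalIntegrable _ _),
        intervalIntegral.integral_const, intervalIntegral.integral_div, integral_id]
      field_simp
      ring_nf
      field_simp
      ring
    · intro x hx
      rw [Set.uIcc_of_le (by linarith)] at hx
      simp only [abs_of_nonneg hx.1]
      field_simp
  have c : Continuous fun x : ℝ => (1 / a) * (1 - |x| / a) := by fun_prop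
  rw [← intervalIntegral.integral_add_adjacent_intervals
    (c.intervalIntegrable (-a) 0) (c.intervalIntegrable 0 a), h1, h2]
  norm_num

instance triMeasure_sfinite (a : ℝ) : SFinite (triMeasure a) := by
  unfold triMeasure; infer_instance

lemma tri_key {a p q : ℝ} (ha : 0 < a) (hq : 0 < q) (hqp : q ≤ p) (hp : p ≤ 1) (x : ℝ) :
    q * triDensity (p * a) x ≤ triDensity a x := by
  have hp0 : 0 < p := lt_of_lt_of_le hq hqp
  have hpa : 0 < p * a := mul_pos hp0 ha
  have hpaa : p * a ≤ a := by nlinarith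
  have ht : 0 ≤ |x| := abs_nonneg x
  unfold triDensity
  split_ifs with h1 h2
  · have e1 : q * (1 / (p * a) * (1 - |x| / (p * a))) = q * (p * a - |x|) / (p * a) ^ 2 := by
      field_simp
    have e2 : 1 / a * (1 - |x| / a) = (a - |x|) / a ^ 2 := by
      field_simp
    rw [e1, e2, div_le_div_iff₀ (by positivity) (by positivity)]
    nlinarith [mul_nonneg (sub_nonneg.2 hqp) (sub_nonneg.2 h1),
      mul_nonneg (mul_nonneg hp0.le ht) (sub_nonneg.2 hp), sq_nonneg a]
  · linarith
  · rename_i hxa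
    have hx1 : |x| / a ≤ 1 := by rw [div_le_one ha]; exact hxa
    have := mul_nonneg (le_of_lt (one_div_pos.2 ha)) (sub_nonneg.2 hx1)
    linarith
  · simp

lemma conv_dirac (μ : Measure ℝ) [SFinite μ] (u : ℝ) :
    μ.conv (Measure.dirac u) = μ.map (· + u) := by
  show Measure.map (fun x : ℝ × ℝ => x.1 + x.2) (μ.prod (Measure.dirac u)) = _
  rw [Measure.prod_dirac, Measure.map_map (by fun_prop) (by fun_prop)]
  rfl

lemma tri_lintegral {a : ℝ} (ha : 0 < a) :
    ∫⁻ x, ENNReal.ofReal (triDensity a x) = 1 := by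
  rw [← ofReal_integral_eq_lintegral_ofReal (triDensity_integrable ha)
    (Filter.Eventually.of_forall (triDensity_nonneg ha)), triDensity_integral ha,
    ENNReal.ofReal_one]

lemma triMeasure_univ {a : ℝ} (ha : 0 < a) : triMeasure a Set.univ = 1 := by
  rw [triMeasure, withDensity_apply _ MeasurableSet.univ, setLIntegral_univ, tri_lintegral ha]

/-- If `F = (1-θ)·H + θ·(K_a ∗ δ_u)` with `a > 0`, `θ ∈ (0,1]`, then for all `0 < q ≤ p ≤ 1`
there is a probability measure `H'` with `F = (1-qθ)·H' + qθ·(K_{pa} ∗ δ_u)`. -/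
theorem stmt5 (F H : Measure ℝ) [IsProbabilityMeasure F] [IsProbabilityMeasure H]
    (a u θ : ℝ) (ha : 0 < a) (hθ : θ ∈ Set.Ioc (0 : ℝ) 1)
    (hF : F = ENNReal.ofReal (1 - θ) • H
        + ENNReal.ofReal θ • ((triMeasure a).conv (Measure.dirac u)))
    (p q : ℝ) (hq : 0 < q) (hqp : q ≤ p) (hp : p ≤ 1) :
    ∃ H' : Measure ℝ, IsProbabilityMeasure H' ∧
      F = ENNReal.ofReal (1 - q * θ) • H'
        + ENNReal.ofReal (q * θ) • ((triMeasure (p * a)).conv (Measure.dirac u)) := by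
  obtain ⟨hθ0, hθ1⟩ := hθ
  have hq1 : q ≤ 1 := le_trans hqp hp
  have hpa : 0 < p * a := mul_pos (lt_of_lt_of_le hq hqp) ha
  by_cases hcrit : q * θ = 1
  · have hq' : q = 1 := by nlinarith
    have hθ' : θ = 1 := by nlinarith
    have hp' : p = 1 := le_antisymm hp (hq' ▸ hqp)
    refine ⟨H, inferInstance, ?_⟩
    rw [hF]
    simp [hq', hθ', hp']
  · have hqθ1 : q * θ ≤ 1 := by nlinarith
    have hlt : q * θ < 1 := lt_of_le_of_ne hqθ1 hcrit
    have hτm : Measurable (fun x : ℝ => x + u) := by fun_prop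
    set g : ℝ → ℝ := fun x => triDensity a x - q * triDensity (p * a) x with hg
    have hkey : ∀ x, q * triDensity (p * a) x ≤ triDensity a x := tri_key ha hq hqp hp
    have hgnn : ∀ x, 0 ≤ g x := fun x => sub_nonneg.2 (hkey x)
    have hgm : Measurable g :=
      (triDensity_measurable a).sub ((triDensity_measurable _).const_mul q)
    set R : Measure ℝ := volume.withDensity (fun x => ENNReal.ofReal (g x)) with hR
    have hsplit : triMeasure a = ENNReal.ofReal q • triMeasure (p * a) + R := by
      have hfe : (fun x => ENNReal.ofReal (triDensity a x))
          = (fun x => ENNReal.ofReal q * ENNReal.ofReal (triDensity (p * a) x))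
            + fun x => ENNReal.ofReal (g x) := by
        funext x
        simp only [Pi.add_apply]
        rw [← ENNReal.ofReal_mul hq.le,
          ← ENNReal.ofReal_add (mul_nonneg hq.le (triDensity_nonneg hpa x)) (hgnn x)]
        congr 1
        simp only [hg]
        ring
      rw [triMeasure, hfe, withDensity_add_left
        ((triDensity_measurable _).ennreal_ofReal.const_mul _) _]
      congr 1
      · have : (fun x => ENNReal.ofReal q * ENNReal.ofReal (triDensity (p * a) x))
            = ENNReal.ofReal q • fun x => ENNReal.ofReal (triDensity (p * a) x) := rfl
        rw [this, withDensity_smul _ (triDensity_measurable _).ennreal_ofReal]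
        rfl
    have hRuniv : R Set.univ = ENNReal.ofReal (1 - q) := by
      have hi : Integrable g :=
        (triDensity_integrable ha).sub ((triDensity_integrable hpa).const_mul q)
      rw [hR, withDensity_apply _ MeasurableSet.univ, setLIntegral_univ,
        ← ofReal_integral_eq_lintegral_ofReal hi (Filter.Eventually.of_forall hgnn)]
      congr 1
      simp only [hg]
      rw [integral_sub (triDensity_integrable ha) ((triDensity_integrable hpa).const_mul q),
        integral_const_mul, triDensity_integral ha, triDensity_integral hpa]
      ring
    have hRconv : R.conv (Measure.dirac u) Set.univ = ENNReal.ofReal (1 - q) := by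
      rw [conv_dirac, Measure.map_apply hτm MeasurableSet.univ, Set.preimage_univ, hRuniv]
    set c : ENNReal := ENNReal.ofReal (1 - q * θ) with hc
    have hc0 : c ≠ 0 := by
      rw [hc, Ne, ENNReal.ofReal_eq_zero, not_le]
      linarith
    have hctop : c ≠ ⊤ := ENNReal.ofReal_ne_top
    set H' : Measure ℝ := c⁻¹ • (ENNReal.ofReal (1 - θ) • H
      + ENNReal.ofReal θ • (R.conv (Measure.dirac u))) with hH'
    have hmass : (ENNReal.ofReal (1 - θ) • H
        + ENNReal.ofReal θ • (R.conv (Measure.dirac u))) Set.univ = c := by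
      rw [Measure.add_apply, Measure.smul_apply, Measure.smul_apply, hRconv, measure_univ,
        smul_eq_mul, smul_eq_mul, mul_one, ← ENNReal.ofReal_mul hθ0.le,
        ← ENNReal.ofReal_add (by linarith) (by nlinarith), hc]
      congr 1
      ring
    have hprob : IsProbabilityMeasure H' := by
      constructor
      rw [hH', Measure.smul_apply, hmass, smul_eq_mul, ENNReal.inv_mul_cancel hc0 hctop]
    refine ⟨H', hprob, ?_⟩
    have hback : ENNReal.ofReal (1 - q * θ) • H'
        = ENNReal.ofReal (1 - θ) • H + ENNReal.ofReal θ • (R.conv (Measure.dirac u)) := by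
      rw [hH', smul_smul, ← hc, ENNReal.mul_inv_cancel hc0 hctop, one_smul]
    have hconvsplit : (triMeasure a).conv (Measure.dirac u)
        = ENNReal.ofReal q • ((triMeasure (p * a)).conv (Measure.dirac u))
          + R.conv (Measure.dirac u) := by
      rw [conv_dirac, hsplit, Measure.map_add _ _ hτm, Measure.map_smul,
        ← conv_dirac (triMeasure (p * a)) u, ← conv_dirac R u]
    rw [hback, hF, hconvsplit, smul_add, smul_smul, ← ENNReal.ofReal_mul hθ0.le,
      mul_comm θ q]
    abel
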